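/- For all real x, y ≥ 0 and all natural numbers n, m, the double integral ∫₀¹∫₀¹ (x(1−u)+yv)^n (y(1−v)+xu)^m du dv equals n! · m! · Σ_{k=0}^{n} Σ_{l=0}^{m} x^{n−k+l} y^{m−l+k} / ((n−k+l+1)! (m−l+k+1)!). Equivalently, with D(n,m;x,y) = x^n y^m/((n+1)!(m+1)!), the transition operator P f(x,y) = ∫₀¹∫₀¹ f(x(1−u)+yv, y(1−v)+xu) du dv satisfies P D(n,m;·,·)(x,y) = Σ_{k=0}^{n} Σ_{l=0}^{m} (1/((n+1)(m+1))) D(n−k+l, m−l+k; x,y). -/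

import Mathlib

open MeasureTheory Finset

lemma beta_nat (a b : ℕ) :
    (∫ u in (0:ℝ)..1, u ^ a * (1 - u) ^ b)
      = (Nat.factorial a : ℝ) * (Nat.factorial b : ℝ) / (Nat.factorial (a + b + 1) : ℝ) := by
  induction b generalizing a with
  | zero =>
    simp only [pow_zero, mul_one, integral_pow, Nat.factorial_zero, Nat.cast_one,
      Nat.add_zero, Nat.factorial_succ, one_pow]
    push_cast
    rw [div_eq_div_iff (by positivity) (by positivity)]
    ring
  | succ b ih =>
    have parts :
        (∫ u in (0:ℝ)..1, u ^ (a + 1) * (-((b + 1 : ℝ) * (1 - u) ^ b)))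
          = (1:ℝ)^(a+1) * (1-1)^(b+1) - (0:ℝ)^(a+1) * (1-0)^(b+1)
            - ∫ u in (0:ℝ)..1, ((a + 1 : ℝ) * u ^ a) * (1 - u) ^ (b + 1) := by
      apply intervalIntegral.integral_mul_deriv_eq_deriv_mul
        (u := fun u : ℝ => u ^ (a+1)) (v := fun u : ℝ => (1 - u) ^ (b+1))
      · intro t _; simpa using hasDerivAt_pow (a+1) t
      · intro t _
        have h : HasDerivAt (fun u : ℝ => (1 - u) ^ (b+1)) _ t := ((hasDerivAt_id t).const_sub 1).pow (b+1)
        simpa [mul_comm, mul_assoc] using h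
      · apply Continuous.intervalIntegrable; fun_prop
      · apply Continuous.intervalIntegrable; fun_prop
    have key : (a + 1 : ℝ) * (∫ u in (0:ℝ)..1, u ^ a * (1 - u) ^ (b+1))
        = (b + 1 : ℝ) * ∫ u in (0:ℝ)..1, u ^ (a+1) * (1 - u) ^ b := by
      have h1 : (∫ u in (0:ℝ)..1, u ^ (a + 1) * (-((b + 1 : ℝ) * (1 - u) ^ b)))
          = -((b+1:ℝ) * ∫ u in (0:ℝ)..1, u ^ (a+1) * (1 - u) ^ b) := by
        rw [← intervalIntegral.integral_const_mul, ← intervalIntegral.integral_neg]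
        congr 1; ext u; ring
      have h2 : (∫ u in (0:ℝ)..1, ((a + 1 : ℝ) * u ^ a) * (1 - u) ^ (b + 1))
          = (a+1:ℝ) * ∫ u in (0:ℝ)..1, u ^ a * (1 - u) ^ (b+1) := by
        rw [← intervalIntegral.integral_const_mul]
        congr 1; ext u; ring
      rw [h1, h2] at parts
      have hb : b + 1 ≠ 0 := Nat.succ_ne_zero b
      simp at parts
      linarith [parts]
    have ha : (a + 1 : ℝ) ≠ 0 := by positivity
    have := ih (a+1)
    rw [this] at key
    have : (∫ u in (0:ℝ)..1, u ^ a * (1 - u) ^ (b+1))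
        = (b + 1 : ℝ) * ((a+1).factorial * b.factorial / ((a+1) + b + 1).factorial) / (a+1) := by
      field_simp at key ⊢
      linarith [key]
    rw [this]
    have e1 : a + 1 + b + 1 = a + (b+1) + 1 := by omega
    rw [e1, Nat.factorial_succ (a), Nat.factorial_succ b]
    push_cast
    have h2 : ((a + (b+1) + 1).factorial : ℝ) ≠ 0 := by positivity
    field_simp

/-- For the Immediate Exchange Model, the transition operator applied to the
duality polynomial `(x,y) ↦ xⁿ yᵐ` expands as a double sum:
∫₀¹∫₀¹ (x(1−u)+yv)^n (y(1−v)+xu)^m du dv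
  = n! m! Σ_{k=0}^{n} Σ_{l=0}^{m} x^{n−k+l} y^{m−l+k} / ((n−k+l+1)! (m−l+k+1)!). -/
theorem immediate_exchange_transition_expansion
    (x y : ℝ) (hx : 0 ≤ x) (hy : 0 ≤ y) (n m : ℕ) :
    (∫ u in (0:ℝ)..1, ∫ v in (0:ℝ)..1,
        (x * (1 - u) + y * v) ^ n * (y * (1 - v) + x * u) ^ m)
      = (Nat.factorial n : ℝ) * (Nat.factorial m : ℝ) *
        ∑ k ∈ Finset.range (n + 1), ∑ l ∈ Finset.range (m + 1),
          x ^ (n - k + l) * y ^ (m - l + k) /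
            ((Nat.factorial (n - k + l + 1) : ℝ) * (Nat.factorial (m - l + k + 1) : ℝ)) := by
  have expand : ∀ u v : ℝ, (x * (1 - u) + y * v) ^ n * (y * (1 - v) + x * u) ^ m
      = ∑ k ∈ Finset.range (n+1), ∑ l ∈ Finset.range (m+1),
          ((n.choose k : ℝ) * (m.choose l : ℝ) * (x^k * y^(n-k) * y^l * x^(m-l)))
            * (u^(m-l) * (1-u)^k) * (v^(n-k) * (1-v)^l) := by
    intro u v
    rw [add_pow, add_pow, Finset.sum_mul_sum]
    refine Finset.sum_congr rfl fun k _ => Finset.sum_congr rfl fun l _ => ?_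
    rw [mul_pow, mul_pow, mul_pow, mul_pow]
    ring
  have inner : ∀ u : ℝ,
      (∫ v in (0:ℝ)..1, (x * (1 - u) + y * v) ^ n * (y * (1 - v) + x * u) ^ m)
      = ∑ k ∈ Finset.range (n+1), ∑ l ∈ Finset.range (m+1),
          ((n.choose k : ℝ) * (m.choose l : ℝ) * (x^k * y^(n-k) * y^l * x^(m-l)))
            * (u^(m-l) * (1-u)^k)
            * (((n-k).factorial : ℝ) * (l.factorial : ℝ) / (((n-k) + l + 1).factorial : ℝ)) := by
    intro u
    simp only [expand]
    rw [intervalIntegral.integral_finset_sum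
      (fun k _ => Continuous.intervalIntegrable (by fun_prop) _ _)]
    refine Finset.sum_congr rfl fun k _ => ?_
    rw [intervalIntegral.integral_finset_sum
      (fun l _ => Continuous.intervalIntegrable (by fun_prop) _ _)]
    refine Finset.sum_congr rfl fun l _ => ?_
    rw [intervalIntegral.integral_const_mul, beta_nat]
  simp only [inner]
  rw [intervalIntegral.integral_finset_sum
    (fun k _ => Continuous.intervalIntegrable (by fun_prop) _ _)]
  simp_rw [Finset.mul_sum]
  conv_rhs => rw [← Finset.sum_range_reflect]
  refine Finset.sum_congr rfl fun k hk => ?_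
  rw [intervalIntegral.integral_finset_sum
    (fun l _ => Continuous.intervalIntegrable (by fun_prop) _ _)]
  conv_rhs => rw [← Finset.sum_range_reflect]
  refine Finset.sum_congr rfl fun l hl => ?_
  rw [intervalIntegral.integral_mul_const, intervalIntegral.integral_const_mul, beta_nat]
  rw [Finset.mem_range] at hk hl
  have hk' : k ≤ n := by omega
  have hl' : l ≤ m := by omega
  have e1 : n + 1 - 1 - k = n - k := by omega
  have e2 : m + 1 - 1 - l = m - l := by omega
  rw [e1, e2]
  have e3 : n - (n - k) + (m - l) = k + (m - l) := by omega
  have e4 : m - (m - l) + (n - k) = l + (n - k) := by omega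
  rw [e3, e4, pow_add, pow_add]
  have key : ((n.choose k : ℝ) * (m.choose l : ℝ)) * ((m-l).factorial * k.factorial)
      * ((n-k).factorial * l.factorial) = (n.factorial : ℝ) * m.factorial := by
    have h1 := Nat.choose_mul_factorial_mul_factorial hk'
    have h2 := Nat.choose_mul_factorial_mul_factorial hl'
    push_cast [← h1, ← h2]
    ring
  have e5 : m - l + k + 1 = k + (m - l) + 1 := by omega
  rw [e5]
  have hE1 : ((k + (m - l) + 1).factorial : ℝ) ≠ 0 := by positivity
  have hE2 : ((l + (n - k) + 1).factorial : ℝ) ≠ 0 := by positivity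
  have hE2' : ((n - k + l + 1).factorial : ℝ) ≠ 0 := by positivity
  have e6 : n - k + l + 1 = l + (n - k) + 1 := by omega
  rw [e6]
  field_simp
  linear_combination (x^k * x^(m-l) * y^l * y^(n-k)) * key
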